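/- Let A be a nonempty closed subset of the unit sphere S² ⊆ ℝ³ such that A contains no pair of antipodal points (for every x ∈ A, −x ∉ A) and the cone C(A) = {t·a : t ≥ 0, a ∈ A} is a convex subset of ℝ³. Then there exists α ∈ A such that ⟨α, x⟩ > 0 for every x ∈ A; that is, A is contained in the open hemisphere of S² centered at the point α of A. -/

import Mathlib

open scoped RealInnerProductSpace

noncomputable section

local notation "E" => EuclideanSpace ℝ (Fin 3)

/-- The convex hull of a compact set in `E` is compact (Carathéodory). -/
lemma aux_isCompact_convexHull {A : Set E} (hA : IsCompact A) (hne : A.Nonempty) :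
    IsCompact (convexHull ℝ A) := by
  classical
  obtain ⟨a₀, ha₀⟩ := hne
  set Φ : (Fin 4 → ℝ) × (Fin 4 → E) → E := fun p => ∑ j : Fin 4, p.1 j • p.2 j with hΦdef
  set D : Set ((Fin 4 → ℝ) × (Fin 4 → E)) :=
    (stdSimplex ℝ (Fin 4)) ×ˢ (Set.pi Set.univ fun _ : Fin 4 => A) with hDdef
  have hD : IsCompact D := (isCompact_stdSimplex ℝ (Fin 4)).prod (isCompact_univ_pi fun _ => hA)
  have hΦ : Continuous Φ := continuous_finset_sum _ fun j _ =>
    ((continuous_apply j).comp continuous_fst).smul ((continuous_apply j).comp continuous_snd)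
  have him : convexHull ℝ A = Φ '' D := by
    apply Set.Subset.antisymm
    · intro x hx
      obtain ⟨ι, hfin, z, w, hzA, hai, hw0, hw1, hxx⟩ :=
        eq_pos_convex_span_of_mem_convexHull hx
      have hcard : Fintype.card ι ≤ 4 := by
        have h1 := hai.card_le_finrank_succ
        have h2 : Module.finrank ℝ (vectorSpan ℝ (Set.range z)) ≤ 3 := by
          have h3 := Submodule.finrank_le (vectorSpan ℝ (Set.range z))
          simpa [finrank_euclideanSpace_fin] using h3
        omega
      obtain ⟨e⟩ : Nonempty (ι ↪ Fin 4) :=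
        Function.Embedding.nonempty_of_card_le (by simpa using hcard)
      set w' : Fin 4 → ℝ := Function.extend e w 0 with hw'def
      set z' : Fin 4 → E := Function.extend e z (fun _ => a₀) with hz'def
      have hwe : ∀ i, w' (e i) = w i := fun i => e.injective.extend_apply _ _ _
      have hze : ∀ i, z' (e i) = z i := fun i => e.injective.extend_apply _ _ _
      have hwnot : ∀ j, (¬∃ i, e i = j) → w' j = 0 := fun j hj =>
        Function.extend_apply' _ _ _ hj
      have hznot : ∀ j, (¬∃ i, e i = j) → z' j = a₀ := fun j hj =>
        Function.extend_apply' _ _ _ hj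
      have himsub : (Finset.univ.image e) ⊆ Finset.univ := Finset.subset_univ _
      have hinj : ∀ i ∈ Finset.univ, ∀ i' ∈ Finset.univ,
          e i = e i' → i = i' := fun i _ i' _ h => e.injective h
      have hsumw : ∑ j : Fin 4, w' j = 1 := by
        rw [← Finset.sum_subset himsub (fun j _ hj => ?_), Finset.sum_image hinj]
        · simp only [hwe]; exact hw1
        · apply hwnot
          simpa using hj
      have hsumwz : ∑ j : Fin 4, w' j • z' j = x := by
        rw [← Finset.sum_subset himsub (fun j _ hj => ?_), Finset.sum_image hinj]
        · simp only [hwe, hze]; exact hxx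
        · have : w' j = 0 := hwnot j (by simpa using hj)
          rw [this, zero_smul]
      have hwnn : ∀ j, 0 ≤ w' j := by
        intro j
        by_cases hj : ∃ i, e i = j
        · obtain ⟨i, rfl⟩ := hj
          rw [hwe]; exact (hw0 i).le
        · rw [hwnot j hj]
      have hz'A : ∀ j, z' j ∈ A := by
        intro j
        by_cases hj : ∃ i, e i = j
        · obtain ⟨i, rfl⟩ := hj
          rw [hze]; exact hzA ⟨i, rfl⟩
        · rw [hznot j hj]; exact ha₀
      refine ⟨(w', z'), ⟨⟨hwnn, hsumw⟩, fun j _ => hz'A j⟩, hsumwz⟩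
    · rintro x ⟨⟨w, z⟩, ⟨hw, hz⟩, rfl⟩
      exact (convex_convexHull ℝ A).sum_mem (fun i _ => hw.1 i) hw.2
        (fun i _ => subset_convexHull ℝ A (hz i (Set.mem_univ i)))
  rw [him]
  exact hD.image hΦ

/-- a nonempty closed subset of the unit sphere `S² ⊆ ℝ³` with no
antipodal pairs whose cone over the origin is convex is contained in an open
hemisphere centered at one of its own points. -/
theorem statement_13 (A : Set E) (hA : A ⊆ Metric.sphere (0 : E) 1)
    (hne : A.Nonempty) (hcl : IsClosed A)
    (hanti : ∀ x ∈ A, -x ∉ A)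
    (hcone : Convex ℝ {y : E | ∃ t : ℝ, 0 ≤ t ∧ ∃ a ∈ A, y = t • a}) :
    ∃ α ∈ A, ∀ x ∈ A, 0 < ⟪α, x⟫ := by
  classical
  set C : Set E := {y : E | ∃ t : ℝ, 0 ≤ t ∧ ∃ a ∈ A, y = t • a} with hCdef
  have hnorm : ∀ a ∈ A, ‖a‖ = 1 := fun a ha => by
    simpa using mem_sphere_zero_iff_norm.1 (hA ha)
  have hAC : A ⊆ C := fun a ha => ⟨1, zero_le_one, a, ha, (one_smul ℝ a).symm⟩
  have hCsmul : ∀ s : ℝ, 0 ≤ s → ∀ y ∈ C, s • y ∈ C := by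
    rintro s hs y ⟨t, ht, a, ha, rfl⟩
    exact ⟨s * t, mul_nonneg hs ht, a, ha, smul_smul s t a⟩
  have hCadd : ∀ x ∈ C, ∀ y ∈ C, x + y ∈ C := by
    intro x hx y hy
    have hmid : (1 / 2 : ℝ) • x + (1 / 2 : ℝ) • y ∈ C :=
      hcone hx hy (by norm_num) (by norm_num) (by norm_num)
    have := hCsmul 2 (by norm_num) _ hmid
    have h2 : (2 : ℝ) • ((1 / 2 : ℝ) • x + (1 / 2 : ℝ) • y) = x + y := by
      rw [smul_add, smul_smul, smul_smul]; norm_num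
    rwa [h2] at this
  have hC0 : (0 : E) ∈ C := by
    obtain ⟨a, ha⟩ := hne
    exact ⟨0, le_rfl, a, ha, (zero_smul ℝ a).symm⟩
  have hCA : ∀ y ∈ C, ‖y‖ = 1 → y ∈ A := by
    rintro y ⟨t, ht, a, ha, rfl⟩ hy
    have : |t| * ‖a‖ = 1 := by rwa [norm_smul, Real.norm_eq_abs] at hy
    rw [hnorm a ha, mul_one, abs_of_nonneg ht] at this
    rw [this, one_smul]
    exact ha
  -- compactness of A
  have hAcomp : IsCompact A :=
    (isCompact_sphere (0 : E) 1).of_isClosed_subset hcl hA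
  -- 0 is not in the convex hull of A
  have h0 : (0 : E) ∉ convexHull ℝ A := by
    intro h0
    obtain ⟨ι, hfin, z, w, hzA, hai, hw0, hw1, hxx⟩ := eq_pos_convex_span_of_mem_convexHull h0
    have hιne : Nonempty ι := by
      by_contra hι
      rw [not_nonempty_iff] at hι
      simp at hw1
    obtain ⟨i₀⟩ := hιne
    have hsplit : w i₀ • z i₀ + ∑ i ∈ Finset.univ.erase i₀, w i • z i = 0 := by
      rw [Finset.add_sum_erase Finset.univ (fun i => w i • z i) (Finset.mem_univ i₀)]
      exact hxx
    have hrest : ∑ i ∈ Finset.univ.erase i₀, w i • z i ∈ C := by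
      apply Finset.sum_induction _ (· ∈ C) (fun a b ha hb => hCadd a ha b hb) hC0
      intro i _
      exact hCsmul (w i) (hw0 i).le _ (hAC (hzA ⟨i, rfl⟩))
    have hneg : -z i₀ ∈ C := by
      have hrest' : ∑ i ∈ Finset.univ.erase i₀, w i • z i = -(w i₀ • z i₀) :=
        eq_neg_of_add_eq_zero_right hsplit
      have h1 : -(w i₀ • z i₀) ∈ C := hrest' ▸ hrest
      have := hCsmul (w i₀)⁻¹ (inv_nonneg.2 (hw0 i₀).le) _ h1
      rwa [smul_neg, smul_smul, inv_mul_cancel₀ (hw0 i₀).ne', one_smul] at this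
    have hzi : z i₀ ∈ A := hzA ⟨i₀, rfl⟩
    exact hanti _ hzi (hCA _ hneg (by rw [norm_neg]; exact hnorm _ hzi))
  -- separating functional
  obtain ⟨u, hu⟩ : ∃ u : E, ∀ x ∈ A, 0 < ⟪u, x⟫ := by
    have hcomp := aux_isCompact_convexHull hAcomp hne
    obtain ⟨f, s, hfs, hfb⟩ :=
      geometric_hahn_banach_point_closed (convex_convexHull ℝ A) hcomp.isClosed h0
    refine ⟨(InnerProductSpace.toDual ℝ _).symm f, fun x hx => ?_⟩
    rw [InnerProductSpace.toDual_symm_apply]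
    have h1 : (0 : ℝ) < s := by simpa using hfs
    exact h1.trans (hfb x (subset_convexHull ℝ A hx))
  -- maximize ⟪u, ·⟫ over A
  have hcont : ContinuousOn (fun a : E => ⟪u, a⟫) A :=
    (continuous_const.inner continuous_id).continuousOn
  obtain ⟨α, hαA, hmax⟩ := hAcomp.exists_isMaxOn hne hcont
  refine ⟨α, hαA, fun x hx => ?_⟩
  by_contra hcon
  push_neg at hcon
  set p : ℝ := ⟪u, α⟫ with hpdef
  set q : ℝ := ⟪u, x⟫ with hqdef
  set c : ℝ := ⟪α, x⟫ with hcdef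
  have hp : 0 < p := hu α hαA
  have hq : 0 < q := hu x hx
  have hc : c ≤ 0 := hcon
  set Dq : ℝ := p * q - p ^ 2 * c with hDdef
  have hD : 0 < Dq := by nlinarith
  set B : ℝ := |p ^ 2 - q ^ 2| with hBdef
  have hB : 0 ≤ B := abs_nonneg _
  have hB1 : -B ≤ q ^ 2 - p ^ 2 := by
    rw [hBdef]
    cases abs_cases (p ^ 2 - q ^ 2) with
    | inl h => linarith [h.1]
    | inr h => linarith [h.1]
  set t : ℝ := min (1 / 2) (Dq / (2 * (B + 1))) with htdef
  have ht0 : 0 < t := lt_min (by norm_num) (div_pos hD (by linarith))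
  have ht2 : t ≤ 1 / 2 := min_le_left _ _
  have htD : t * (B + 1) ≤ Dq / 2 := by
    have h1 : t ≤ Dq / (2 * (B + 1)) := min_le_right _ _
    have h2 : (0 : ℝ) < 2 * (B + 1) := by linarith
    have h3 : t * (2 * (B + 1)) ≤ Dq := (le_div_iff₀ h2).1 h1
    linarith
  have hF : 0 < 2 * t * (1 - t) * Dq + t ^ 2 * (q ^ 2 - p ^ 2) := by
    nlinarith [mul_pos ht0 hD]
  set v : E := (1 - t) • α + t • x with hvdef
  have hvC : v ∈ C := hcone (hAC hαA) (hAC hx) (by linarith) ht0.le (by ring)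
  have hnv : ‖v‖ ^ 2 = (1 - t) ^ 2 + 2 * ((1 - t) * t * c) + t ^ 2 := by
    rw [hvdef, norm_add_sq_real, real_inner_smul_left, real_inner_smul_right,
      norm_smul, norm_smul, Real.norm_eq_abs, Real.norm_eq_abs,
      abs_of_nonneg (by linarith : (0:ℝ) ≤ 1 - t), abs_of_nonneg ht0.le,
      hnorm α hαA, hnorm x hx]
    ring
  have huv : ⟪u, v⟫ = (1 - t) * p + t * q := by
    rw [hvdef, inner_add_right, real_inner_smul_right, real_inner_smul_right]
  have hpos : 0 < (1 - t) * p + t * q := by nlinarith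
  have hkey : (p * ‖v‖) ^ 2 < ((1 - t) * p + t * q) ^ 2 := by
    have : (p * ‖v‖) ^ 2 = p ^ 2 * ‖v‖ ^ 2 := by ring
    rw [this, hnv]
    nlinarith [hF]
  have hlt : p * ‖v‖ < (1 - t) * p + t * q :=
    lt_of_pow_lt_pow_left₀ 2 hpos.le hkey
  have hv0 : v ≠ 0 := by
    intro h
    rw [h, inner_zero_right] at huv
    linarith
  have hnvpos : 0 < ‖v‖ := norm_pos_iff.2 hv0
  set wpt : E := ‖v‖⁻¹ • v with hwdef
  have hwA : wpt ∈ A := by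
    apply hCA _ (hCsmul _ (inv_nonneg.2 hnvpos.le) _ hvC)
    rw [norm_smul, Real.norm_eq_abs, abs_of_nonneg (inv_nonneg.2 hnvpos.le),
      inv_mul_cancel₀ hnvpos.ne']
  have hwval : ⟪u, wpt⟫ = ‖v‖⁻¹ * ((1 - t) * p + t * q) := by
    rw [hwdef, real_inner_smul_right, huv]
  have hgt : p < ⟪u, wpt⟫ := by
    rw [hwval, ← div_eq_inv_mul]
    exact (lt_div_iff₀ hnvpos).2 (by linarith [hlt])
  have := hmax hwA
  simp only [Set.mem_setOf_eq] at this
  have hle : ⟪u, wpt⟫ ≤ p := this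
  linarith
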